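/- Let G be a countable left-orderable group with only finitely many left orders. Then the rational series of G is unique: if G = G₀ ⊳ G₁ ⊳ ⋯ ⊳ G_{n+1} = {e} and G = H₀ ⊳ H₁ ⊳ ⋯ ⊳ H_{m+1} = {e} are both rational series of G, then n = m and G_i = H_i for all i. Consequently each G_i is invariant under every automorphism of G. -/

import Mathlib

/-- A left-invariant strict total order on a group `G`. -/
structure LeftOrder (G : Type*) [Group G] where
  lt : G → G → Prop
  irrefl : ∀ g, ¬ lt g g
  trans : ∀ f g h, lt f g → lt g h → lt f h
  total : ∀ f g, f ≠ g → lt f g ∨ lt g f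
  mul_left : ∀ f g h, lt f g → lt (h * f) (h * g)

/-- A rational group: an (automatically abelian) group embeddable into `(ℚ, +)`. -/
def IsRationalGroup (H : Type*) [Group H] : Prop :=
  ∃ f : H → ℚ, (∀ a b : H, f (a * b) = f a + f b) ∧ Function.Injective f

/-- A group is bi-orderable if it admits a strict total order invariant under both
left and right multiplication. -/
def IsBiorderable (H : Type*) [Group H] : Prop :=
  ∃ r : H → H → Prop, (∀ a, ¬ r a a) ∧ (∀ a b c, r a b → r b c → r a c) ∧
    (∀ a b, a ≠ b → r a b ∨ r b a) ∧
    (∀ a b c, r a b → r (c * a) (c * b)) ∧ (∀ a b c, r a b → r (a * c) (b * c))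

/-- A rational series `G = G₀ ⊳ G₁ ⊳ ⋯ ⊳ G_{n+1} = {e}`: each `G_{i+1}` is a normal
subgroup of `G_i` and each quotient `G_i/G_{i+1}` is a nontrivial rational group. -/
def IsRationalSeries {G : Type*} [Group G] (n : ℕ) (Gs : ℕ → Subgroup G) : Prop :=
  Gs 0 = ⊤ ∧ Gs (n + 1) = ⊥ ∧
  ∀ i ≤ n, Gs (i + 1) ≤ Gs i ∧
    ∃ _ : ((Gs (i + 1)).subgroupOf (Gs i)).Normal,
      IsRationalGroup (↥(Gs i) ⧸ (Gs (i + 1)).subgroupOf (Gs i)) ∧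
      Nontrivial (↥(Gs i) ⧸ (Gs (i + 1)).subgroupOf (Gs i))

/-- The Tararin condition: for `0 ≤ i ≤ n − 1`, the subgroup `G_{i+2}` is normal in `G_i`
and the quotient `G_i/G_{i+2}` is not bi-orderable. -/
def TararinCondition {G : Type*} [Group G] (n : ℕ) (Gs : ℕ → Subgroup G) : Prop :=
  ∀ i, i + 2 ≤ n + 1 →
    ∃ _ : ((Gs (i + 2)).subgroupOf (Gs i)).Normal,
      ¬ IsBiorderable (↥(Gs i) ⧸ (Gs (i + 2)).subgroupOf (Gs i))

namespace TararinAux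

universe u
variable {G : Type u} [Group G]

theorem ext' {α β : LeftOrder G} (h : α.lt = β.lt) : α = β := by
  cases α; cases β; cases h; rfl

theorem qhom_one {p : G → ℚ} (hm : ∀ a b, p (a * b) = p a + p b) : p 1 = 0 := by
  have := hm 1 1; simp only [mul_one] at this; linarith

theorem qhom_inv {p : G → ℚ} (hm : ∀ a b, p (a * b) = p a + p b) (x : G) : p x⁻¹ = -p x := by
  have h1 := qhom_one hm
  have := hm x x⁻¹
  rw [mul_inv_cancel] at this
  linarith

theorem qhom_zpow {p : G → ℚ} (hm : ∀ a b, p (a * b) = p a + p b) (x : G) (k : ℤ) :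
    p (x ^ k) = k * p x := by
  induction k using Int.induction_on with
  | zero => simpa using qhom_one hm
  | succ i ih => rw [zpow_add_one, hm, ih]; push_cast; ring
  | pred i ih => rw [zpow_sub_one, hm, ih, qhom_inv hm]; push_cast; ring

def restrictOrder (ω : LeftOrder G) (K : Subgroup G) : LeftOrder K where
  lt a b := ω.lt ↑a ↑b
  irrefl a := ω.irrefl ↑a
  trans a b c := ω.trans _ _ _
  total a b h := ω.total _ _ fun hc => h (Subtype.ext hc)
  mul_left a b c h := by simpa using ω.mul_left (↑a) (↑b) (↑c) h

theorem infinite_of_two_homs (ω : LeftOrder G)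
    {p q : G → ℚ} (hp : ∀ a b, p (a * b) = p a + p b) (hq : ∀ a b, q (a * b) = q a + q b)
    {g₀ g₁ : G} (h0p : p g₀ = 0) (h0q : q g₀ ≠ 0) (h1p : p g₁ ≠ 0)
    (hfin : Finite (LeftOrder G)) : False := by
  classical
  set v : ℝ → G → ℝ := fun s g => (q g : ℝ) - s * (p g : ℝ) with hv
  have hvmul : ∀ s a b, v s (a * b) = v s a + v s b := by
    intro s a b; simp only [hv, hp, hq]; push_cast; ring
  have hv1 : ∀ s, v s 1 = 0 := by
    intro s; simp [hv, qhom_one hp, qhom_one hq]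
  let O : ℝ → LeftOrder G := fun s =>
    { lt := fun g h => v s g < v s h ∨ (v s g = v s h ∧ ω.lt g h)
      irrefl := fun g hlt => by
        rcases hlt with h | ⟨_, h⟩
        · exact lt_irrefl _ h
        · exact ω.irrefl g h
      trans := fun a b c hab hbc => by
        rcases hab with h1 | ⟨h1, h1'⟩ <;> rcases hbc with h2 | ⟨h2, h2'⟩
        · exact Or.inl (h1.trans h2)
        · exact Or.inl (h1.trans_eq h2)
        · exact Or.inl (h1.trans_lt h2)
        · exact Or.inr ⟨h1.trans h2, ω.trans _ _ _ h1' h2'⟩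
      total := fun a b hab => by
        rcases lt_trichotomy (v s a) (v s b) with h | h | h
        · exact Or.inl (Or.inl h)
        · rcases ω.total a b hab with h' | h'
          · exact Or.inl (Or.inr ⟨h, h'⟩)
          · exact Or.inr (Or.inr ⟨h.symm, h'⟩)
        · exact Or.inr (Or.inl h)
      mul_left := fun a b c hab => by
        rcases hab with h | ⟨h, h'⟩
        · exact Or.inl (by rw [hvmul, hvmul]; linarith)
        · exact Or.inr ⟨by rw [hvmul, hvmul, h], ω.mul_left _ _ _ h'⟩ }
  have hexists : ∀ s s' : ℝ, s < s' → ∃ g : G, 0 < v s g ∧ v s' g < 0 := by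
    intro s s' hss
    obtain ⟨t, ht1, ht2⟩ := exists_rat_btwn hss
    set a := p g₁ with ha
    set c := q g₀ with hc
    set d := q g₁ with hd
    set u : ℚ := (t * a - d) / c with hu
    have hden : (0 : ℚ) < (u.den : ℚ) := by exact_mod_cast u.pos
    have hnum : (u.num : ℚ) = u * (u.den : ℚ) := by
      rw [Rat.mul_den_eq_num]
    obtain ⟨k, l, hkl, hla⟩ : ∃ k l : ℤ, (k : ℚ) = u * l ∧ 0 < (l : ℚ) * a := by
      rcases lt_or_gt_of_ne h1p with hneg | hpos
      · refine ⟨-u.num, -u.den, ?_, ?_⟩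
        · push_cast; rw [hnum]; ring
        · push_cast; nlinarith
      · refine ⟨u.num, u.den, ?_, ?_⟩
        · push_cast; rw [hnum]
        · positivity
    refine ⟨g₀ ^ k * g₁ ^ l, ?_, ?_⟩
    · have hpg : p (g₀ ^ k * g₁ ^ l) = (l : ℚ) * a := by
        rw [hp, qhom_zpow hp, qhom_zpow hp, h0p]; ring
      have hqg : q (g₀ ^ k * g₁ ^ l) = (t : ℚ) * ((l : ℚ) * a) := by
        rw [hq, qhom_zpow hq, qhom_zpow hq, hkl, hu]
        field_simp
        ring
      show (0 : ℝ) < _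
      rw [hv]
      simp only [hpg, hqg]
      push_cast
      have hla' : (0 : ℝ) < (l : ℝ) * (a : ℝ) := by exact_mod_cast hla
      nlinarith [mul_pos (sub_pos.mpr ht1) hla']
    · have hpg : p (g₀ ^ k * g₁ ^ l) = (l : ℚ) * a := by
        rw [hp, qhom_zpow hp, qhom_zpow hp, h0p]; ring
      have hqg : q (g₀ ^ k * g₁ ^ l) = (t : ℚ) * ((l : ℚ) * a) := by
        rw [hq, qhom_zpow hq, qhom_zpow hq, hkl, hu]
        field_simp
        ring
      show _ < (0 : ℝ)
      rw [hv]
      simp only [hpg, hqg]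
      push_cast
      have hla' : (0 : ℝ) < (l : ℝ) * (a : ℝ) := by exact_mod_cast hla
      nlinarith [mul_pos (sub_pos.mpr ht2) hla']
  have hO : ∀ s s' : ℝ, s < s' → O s ≠ O s' := by
    intro s s' hss heq
    obtain ⟨g, hg1, hg2⟩ := hexists s s' hss
    have h1 : (O s).lt 1 g := Or.inl (by rw [hv1]; exact hg1)
    rw [heq] at h1
    rcases h1 with h | ⟨h, _⟩
    · rw [hv1] at h; linarith
    · rw [hv1] at h; linarith
  have hinj : Function.Injective fun n : ℕ => O n := by
    intro n n' h
    by_contra hne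
    rcases lt_or_gt_of_ne hne with hlt | hlt
    · exact hO n n' (by exact_mod_cast hlt) h
    · exact hO n' n (by exact_mod_cast hlt) h.symm
  haveI := Finite.of_injective _ hinj
  exact not_finite ℕ

theorem finite_restrict {p : G → ℚ} (hp : ∀ a b, p (a * b) = p a + p b)
    (K : Subgroup G) (hK : ∀ g, g ∈ K ↔ p g = 0) (hfin : Finite (LeftOrder G)) :
    Finite (LeftOrder K) := by
  classical
  have hker : ∀ g h : G, g⁻¹ * h ∈ K → p g = p h := by
    intro g h hgh
    have := (hK _).1 hgh
    rw [hp, qhom_inv hp] at this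
    linarith
  let F : LeftOrder K → LeftOrder G := fun α =>
    { lt := fun g h => p g < p h ∨ ∃ hk : g⁻¹ * h ∈ K, α.lt 1 ⟨g⁻¹ * h, hk⟩
      irrefl := fun g hlt => by
        rcases hlt with h | ⟨hk, h⟩
        · exact lt_irrefl _ h
        · have h1 : (⟨g⁻¹ * g, hk⟩ : K) = 1 := by
            apply Subtype.ext; simp
          rw [h1] at h
          exact α.irrefl 1 h
      trans := fun a b c hab hbc => by
        rcases hab with h1 | ⟨k1, h1⟩ <;> rcases hbc with h2 | ⟨k2, h2⟩
        · exact Or.inl (h1.trans h2)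
        · exact Or.inl (lt_of_lt_of_eq h1 (hker _ _ k2))
        · exact Or.inl (lt_of_eq_of_lt (hker _ _ k1) h2)
        · have hk : a⁻¹ * c ∈ K := by
            have := K.mul_mem k1 k2
            rwa [show (a⁻¹ * b) * (b⁻¹ * c) = a⁻¹ * c by group] at this
          refine Or.inr ⟨hk, ?_⟩
          have hmul : (⟨a⁻¹ * c, hk⟩ : K) = ⟨a⁻¹ * b, k1⟩ * ⟨b⁻¹ * c, k2⟩ := by
            apply Subtype.ext
            show a⁻¹ * c = (a⁻¹ * b) * (b⁻¹ * c)
            group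
          rw [hmul]
          have h3 := α.mul_left 1 ⟨b⁻¹ * c, k2⟩ ⟨a⁻¹ * b, k1⟩ h2
          rw [mul_one] at h3
          exact α.trans _ _ _ h1 h3
      total := fun a b hab => by
        rcases lt_trichotomy (p a) (p b) with h | h | h
        · exact Or.inl (Or.inl h)
        · have hk : a⁻¹ * b ∈ K := (hK _).2 (by rw [hp, qhom_inv hp]; linarith)
          have hne : (1 : K) ≠ ⟨a⁻¹ * b, hk⟩ := by
            intro hc
            apply hab
            have h1 : (1 : G) = a⁻¹ * b := congrArg Subtype.val hc
            have := h1.symm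
            rwa [inv_mul_eq_one] at this
          rcases α.total 1 _ hne with h' | h'
          · exact Or.inl (Or.inr ⟨hk, h'⟩)
          · have hk' : b⁻¹ * a ∈ K := by
              have := K.inv_mem hk
              rwa [show (a⁻¹ * b)⁻¹ = b⁻¹ * a by group] at this
            refine Or.inr (Or.inr ⟨hk', ?_⟩)
            have h3 := α.mul_left _ _ (⟨a⁻¹ * b, hk⟩ : K)⁻¹ h'
            rw [inv_mul_cancel, mul_one] at h3
            have hiv : (⟨a⁻¹ * b, hk⟩ : K)⁻¹ = ⟨b⁻¹ * a, hk'⟩ := by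
              apply Subtype.ext
              show (a⁻¹ * b)⁻¹ = b⁻¹ * a
              group
            rwa [hiv] at h3
        · exact Or.inr (Or.inl h)
      mul_left := fun a b c hab => by
        rcases hab with h | ⟨hk, h⟩
        · exact Or.inl (by rw [hp, hp]; linarith)
        · have he : (c * a)⁻¹ * (c * b) = a⁻¹ * b := by group
          have hk' : (c * a)⁻¹ * (c * b) ∈ K := by rw [he]; exact hk
          refine Or.inr ⟨hk', ?_⟩
          have : (⟨(c * a)⁻¹ * (c * b), hk'⟩ : K) = ⟨a⁻¹ * b, hk⟩ := Subtype.ext he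
          rw [this]
          exact h }
  have hiff : ∀ (γ : LeftOrder K) (x y : K), (F γ).lt ↑x ↑y ↔ γ.lt x y := by
    intro γ x y
    constructor
    · rintro (h | ⟨hk, h⟩)
      · exfalso
        rw [(hK _).1 x.2, (hK _).1 y.2] at h
        exact lt_irrefl _ h
      · have hxy : (⟨(↑x)⁻¹ * ↑y, hk⟩ : K) = x⁻¹ * y := Subtype.ext rfl
        rw [hxy] at h
        have h2 := γ.mul_left 1 (x⁻¹ * y) x h
        rwa [mul_one, mul_inv_cancel_left] at h2
    · intro h
      have hk : (x : G)⁻¹ * (y : G) ∈ K := K.mul_mem (K.inv_mem x.2) y.2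
      refine Or.inr ⟨hk, ?_⟩
      have hxy : (⟨(↑x)⁻¹ * ↑y, hk⟩ : K) = x⁻¹ * y := Subtype.ext rfl
      rw [hxy]
      have h2 := γ.mul_left x y x⁻¹ h
      rwa [inv_mul_cancel] at h2
  have hinj : Function.Injective F := by
    intro α β hFab
    apply ext'
    funext x y
    apply propext
    refine (hiff α x y).symm.trans ?_
    rw [hFab]
    exact hiff β x y
  exact Finite.of_injective F hinj

theorem normal_of_equiv {A B : Type*} [Group A] [Group B] (e : A ≃* B)
    (M : Subgroup A) (N : Subgroup B) (h : ∀ x, x ∈ M ↔ e x ∈ N) (hN : N.Normal) :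
    M.Normal := by
  constructor
  intro x hx g
  rw [h] at hx ⊢
  rw [map_mul, map_mul, map_inv]
  exact hN.conj_mem _ hx _

theorem transfer_of_equiv {A B : Type*} [Group A] [Group B] (e : A ≃* B)
    (M : Subgroup A) (N : Subgroup B) (h : ∀ x, x ∈ M ↔ e x ∈ N)
    (hN : N.Normal) (hM : M.Normal)
    (hrat : IsRationalGroup (B ⧸ N)) (hnt : Nontrivial (B ⧸ N)) :
    IsRationalGroup (A ⧸ M) ∧ Nontrivial (A ⧸ M) := by
  haveI := hN; haveI := hM
  have hle : M ≤ N.comap e.toMonoidHom := fun x hx => (h x).1 hx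
  have hle' : N ≤ M.comap e.symm.toMonoidHom := by
    intro x hx
    show e.symm x ∈ M
    rw [h]
    simpa using hx
  set Φ := QuotientGroup.map M N e.toMonoidHom hle with hΦ
  set Ψ := QuotientGroup.map N M e.symm.toMonoidHom hle' with hΨ
  have hΦinj : Function.Injective Φ := by
    intro x y
    refine QuotientGroup.induction_on x fun a => QuotientGroup.induction_on y fun b hab => ?_
    rw [hΦ, QuotientGroup.map_mk, QuotientGroup.map_mk] at hab
    rw [QuotientGroup.eq] at hab ⊢
    rw [h]
    simpa [map_mul, map_inv] using hab
  have hΨinj : Function.Injective Ψ := by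
    intro x y
    refine QuotientGroup.induction_on x fun a => QuotientGroup.induction_on y fun b hab => ?_
    rw [hΨ, QuotientGroup.map_mk, QuotientGroup.map_mk] at hab
    rw [QuotientGroup.eq] at hab ⊢
    have := (h _).1 hab
    simpa [map_mul, map_inv] using this
  obtain ⟨f, hf, hfinj⟩ := hrat
  constructor
  · refine ⟨fun x => f (Φ x), ?_, ?_⟩
    · intro a b
      show f (Φ (a * b)) = f (Φ a) + f (Φ b)
      rw [map_mul, hf]
    · exact fun x y hxy => hΦinj (hfinj hxy)
  · obtain ⟨b1, b2, hb⟩ := hnt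
    exact ⟨Ψ b1, Ψ b2, fun hc => hb (hΨinj hc)⟩

theorem series_hom {n : ℕ} {Gs : ℕ → Subgroup G} (hG : IsRationalSeries n Gs) :
    ∃ p : G → ℚ, (∀ a b, p (a * b) = p a + p b) ∧ (∀ g, g ∈ Gs 1 ↔ p g = 0) ∧ ∃ g, p g ≠ 0 := by
  obtain ⟨htop, hbot, hcond⟩ := hG
  obtain ⟨hle, hnorm, ⟨f, hf, hfinj⟩, hnt⟩ := hcond 0 (Nat.zero_le n)
  haveI := hnorm
  have hmem : ∀ g : G, g ∈ Gs 0 := fun g => by rw [htop]; exact Subgroup.mem_top g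
  set incl : G → ↥(Gs 0) := fun g => ⟨g, hmem g⟩ with hincl
  set π := QuotientGroup.mk' ((Gs 1).subgroupOf (Gs 0)) with hπ
  have hf1 : f 1 = 0 := qhom_one hf
  refine ⟨fun g => f (π (incl g)), ?_, ?_, ?_⟩
  · intro a b
    show f (π (incl (a * b))) = f (π (incl a)) + f (π (incl b))
    have h1 : incl (a * b) = incl a * incl b := rfl
    rw [h1, map_mul, hf]
  · intro g
    constructor
    · intro hg
      have h1 : π (incl g) = 1 := by
        rw [hπ, QuotientGroup.mk'_apply, QuotientGroup.eq_one_iff]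
        exact Subgroup.mem_subgroupOf.2 hg
      show f (π (incl g)) = 0
      rw [h1, hf1]
    · intro hg
      have h1 : π (incl g) = 1 := hfinj (by rw [hf1]; exact hg)
      rw [hπ, QuotientGroup.mk'_apply, QuotientGroup.eq_one_iff] at h1
      exact Subgroup.mem_subgroupOf.1 h1
  · obtain ⟨c1, c2, hc⟩ := hnt
    by_contra hall
    push_neg at hall
    apply hc
    obtain ⟨x1, rfl⟩ := QuotientGroup.mk'_surjective _ c1
    obtain ⟨x2, rfl⟩ := QuotientGroup.mk'_surjective _ c2
    have e1 : QuotientGroup.mk' ((Gs 1).subgroupOf (Gs 0)) x1 = π (incl ↑x1) := by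
      rw [hπ]
    have e2 : QuotientGroup.mk' ((Gs 1).subgroupOf (Gs 0)) x2 = π (incl ↑x2) := by
      rw [hπ]
    apply hfinj
    rw [e1, e2, hall, hall]

theorem series_chain {n : ℕ} {Gs : ℕ → Subgroup G} (hG : IsRationalSeries n Gs) :
    ∀ j, 1 ≤ j → j ≤ n + 1 → Gs j ≤ Gs 1 := by
  intro j
  induction j with
  | zero => omega
  | succ k ih =>
    intro _ h2
    rcases Nat.eq_zero_or_pos k with h | h
    · subst h; exact le_rfl
    · exact ((hG.2.2 k (by omega)).1).trans (ih h (by omega))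

theorem not_nontrivial_quot_of_bot {K : Subgroup G} (hK : K = ⊥) (N : Subgroup ↥K)
    (h : Nontrivial (↥K ⧸ N)) : False := by
  subst hK
  haveI : Subsingleton ↥(⊥ : Subgroup G) :=
    ⟨fun a b => Subtype.ext (by rw [Subgroup.mem_bot.1 a.2, Subgroup.mem_bot.1 b.2])⟩
  obtain ⟨a, b, hab⟩ := h
  obtain ⟨x, hx⟩ := Quotient.exists_rep a
  obtain ⟨y, hy⟩ := Quotient.exists_rep b
  apply hab
  rw [← hx, ← hy, Subsingleton.elim x y]

theorem first_le (ω : LeftOrder G) (hfin : Finite (LeftOrder G))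
    {n m : ℕ} {Gs Hs : ℕ → Subgroup G}
    (hG : IsRationalSeries n Gs) (hH : IsRationalSeries m Hs) : Gs 1 ≤ Hs 1 := by
  obtain ⟨p, hp, hpker, gp, hgp⟩ := series_hom hG
  obtain ⟨q, hq, hqker, -⟩ := series_hom hH
  intro x hx
  by_contra hnx
  exact infinite_of_two_homs ω hp hq
    ((hpker x).1 hx) (fun hc => hnx ((hqker x).2 hc)) hgp hfin

theorem series_restrict {k : ℕ} {Gs : ℕ → Subgroup G} (hG : IsRationalSeries (k + 1) Gs) :
    IsRationalSeries k (fun i => (Gs (i + 1)).subgroupOf (Gs 1)) := by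
  refine ⟨?_, ?_, ?_⟩
  · show (Gs 1).subgroupOf (Gs 1) = ⊤
    exact Subgroup.subgroupOf_self (Gs 1)
  · show (Gs (k + 1 + 1)).subgroupOf (Gs 1) = ⊥
    rw [hG.2.1]
    exact Subgroup.bot_subgroupOf (Gs 1)
  · intro i hi
    obtain ⟨hle, hnorm, hrat, hnt⟩ := hG.2.2 (i + 1) (by omega)
    have hle1 : Gs (i + 1) ≤ Gs 1 := series_chain hG (i + 1) (by omega) (by omega)
    set e := Subgroup.subgroupOfEquivOfLe hle1 with he
    have hmem : ∀ x, x ∈ ((Gs (i + 2)).subgroupOf (Gs 1)).subgroupOf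
        ((Gs (i + 1)).subgroupOf (Gs 1)) ↔ e x ∈ (Gs (i + 2)).subgroupOf (Gs (i + 1)) := by
      intro x
      rw [Subgroup.mem_subgroupOf, Subgroup.mem_subgroupOf, Subgroup.mem_subgroupOf]
      constructor
      · intro hx
        show ((e x : ↥(Gs (i+1))) : G) ∈ Gs (i + 2)
        rw [he]
        simpa using hx
      · intro hx
        have : ((e x : ↥(Gs (i+1))) : G) ∈ Gs (i + 2) := hx
        rw [he] at this
        simpa using this
    constructor
    · intro x hx
      exact Subgroup.mem_subgroupOf.2 (hle (Subgroup.mem_subgroupOf.1 hx))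
    · have hnorm' := normal_of_equiv e _ _ hmem hnorm
      obtain ⟨hr, hn⟩ := transfer_of_equiv e _ _ hmem hnorm hnorm' hrat hnt
      exact ⟨hnorm', hr, hn⟩

theorem series_map {n : ℕ} {Gs : ℕ → Subgroup G} (hG : IsRationalSeries n Gs) (φ : G ≃* G) :
    IsRationalSeries n (fun i => Subgroup.map φ.toMonoidHom (Gs i)) := by
  refine ⟨?_, ?_, ?_⟩
  · show Subgroup.map _ (Gs 0) = ⊤
    rw [hG.1]
    exact Subgroup.map_top_of_surjective _ φ.surjective
  · show Subgroup.map _ (Gs (n + 1)) = ⊥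
    rw [hG.2.1]
    exact Subgroup.map_bot _
  · intro i hi
    obtain ⟨hle, hnorm, hrat, hnt⟩ := hG.2.2 i hi
    refine ⟨Subgroup.map_mono hle, ?_⟩
    set e0 := Subgroup.equivMapOfInjective (Gs i) φ.toMonoidHom φ.injective with he0
    set e := e0.symm with he
    have hmem : ∀ x, x ∈ (Subgroup.map φ.toMonoidHom (Gs (i + 1))).subgroupOf
        (Subgroup.map φ.toMonoidHom (Gs i)) ↔ e x ∈ (Gs (i + 1)).subgroupOf (Gs i) := by
      intro x
      rw [Subgroup.mem_subgroupOf, Subgroup.mem_subgroupOf]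
      have hcoe : φ.toMonoidHom ((e x : ↥(Gs i)) : G) = (x : G) := by
        have h1 := Subgroup.coe_equivMapOfInjective_apply (Gs i) φ.toMonoidHom φ.injective (e x)
        have h2 : e0 (e x) = x := by rw [he]; exact e0.apply_symm_apply x
        rw [h2] at h1
        exact h1.symm
      rw [← hcoe]
      exact Subgroup.mem_map_iff_mem φ.injective
    have hnorm' := normal_of_equiv e _ _ hmem hnorm
    obtain ⟨hr, hn⟩ := transfer_of_equiv e _ _ hmem hnorm hnorm' hrat hnt
    exact ⟨hnorm', hr, hn⟩

theorem key : ∀ (n : ℕ) (G : Type u) [Group G], ∀ _ : LeftOrder G, Finite (LeftOrder G) →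
    ∀ (m : ℕ) (Gs Hs : ℕ → Subgroup G), IsRationalSeries n Gs → IsRationalSeries m Hs →
    n = m ∧ ∀ i ≤ n + 1, Gs i = Hs i := by
  intro n
  induction n with
  | zero =>
    intro G _ ω hfin m Gs Hs hG hH
    have h1 : Gs 1 = Hs 1 := le_antisymm (first_le ω hfin hG hH) (first_le ω hfin hH hG)
    have hG1 : Gs 1 = ⊥ := hG.2.1
    have hm : m = 0 := by
      by_contra hm
      obtain ⟨-, -, -, hnt⟩ := hH.2.2 1 (by omega)
      exact not_nontrivial_quot_of_bot (by rw [← h1]; exact hG1) _ hnt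
    subst hm
    refine ⟨rfl, ?_⟩
    intro i hi
    interval_cases i
    · rw [hG.1, hH.1]
    · exact h1
  | succ k ih =>
    intro G _ ω hfin m Gs Hs hG hH
    have h1 : Gs 1 = Hs 1 := le_antisymm (first_le ω hfin hG hH) (first_le ω hfin hH hG)
    obtain ⟨m', rfl⟩ : ∃ m', m = m' + 1 := by
      rcases Nat.eq_zero_or_pos m with h0 | hpos
      · exfalso
        have hH1 : Hs 1 = ⊥ := by have := hH.2.1; rwa [h0] at this
        obtain ⟨-, -, -, hnt⟩ := hG.2.2 1 (by omega)
        exact not_nontrivial_quot_of_bot (by rw [h1]; exact hH1) _ hnt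
      · exact ⟨m - 1, by omega⟩
    obtain ⟨p, hp, hpker, -⟩ := series_hom hG
    have hfin' : Finite (LeftOrder ↥(Gs 1)) := finite_restrict hp (Gs 1) hpker hfin
    have ω' := restrictOrder ω (Gs 1)
    have hG' := series_restrict hG
    have hH'0 := series_restrict hH
    have hH' : IsRationalSeries m' fun i => (Hs (i + 1)).subgroupOf (Gs 1) := by
      rw [h1]; exact hH'0
    obtain ⟨hkm, hiter⟩ := ih ↥(Gs 1) ω' hfin' m' _ _ hG' hH'
    refine ⟨by omega, ?_⟩
    intro i hi
    cases i with
    | zero => rw [hG.1, hH.1]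
    | succ j =>
      have hj := hiter j (by omega)
      have hGle : Gs (j + 1) ≤ Gs 1 := series_chain hG (j + 1) (by omega) (by omega)
      have hHle : Hs (j + 1) ≤ Gs 1 := by
        rw [h1]; exact series_chain hH (j + 1) (by omega) (by omega)
      have h2 : Gs (j + 1) ⊓ Gs 1 = Hs (j + 1) ⊓ Gs 1 := Subgroup.subgroupOf_inj.1 hj
      rwa [inf_eq_left.2 hGle, inf_eq_left.2 hHle] at h2

end TararinAux

/-- For a countable left-orderable group with only finitely many left
orders, the rational series is unique, and consequently each of its terms is invariant
under every automorphism of `G`. -/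
theorem tararin_rational_series_unique
    {G : Type*} [Group G] [Countable G]
    (horder : Nonempty (LeftOrder G)) (hfin : Finite (LeftOrder G))
    (n m : ℕ) (Gs Hs : ℕ → Subgroup G)
    (hG : IsRationalSeries n Gs) (hH : IsRationalSeries m Hs) :
    n = m ∧ (∀ i ≤ n + 1, Gs i = Hs i) ∧
      ∀ (φ : G ≃* G) (i : ℕ), i ≤ n + 1 →
        Subgroup.map φ.toMonoidHom (Gs i) = Gs i := by
  obtain ⟨ω⟩ := horder
  obtain ⟨hnm, hiter⟩ := TararinAux.key n G ω hfin m Gs Hs hG hH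
  refine ⟨hnm, hiter, ?_⟩
  intro φ i hi
  obtain ⟨-, hiter2⟩ := TararinAux.key n G ω hfin n _ Gs (TararinAux.series_map hG φ) hG
  exact hiter2 i hi
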